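/- Let b ≥ 1 and let p ∈ {0,1}* be a palindrome. Then the word ψ_b(p)·1 is a palindrome, and the word obtained from ψ_b(p) by removing its first letter (which is 1) is also a palindrome. -/
import Mathlib


/-- The morphism ψ_b on letters: ψ_b(0) = 1·0^{b-1}, ψ_b(1) = 1·0^b
    (letters: `false` = 0, `true` = 1). -/
def psiL (b : ℕ) : Bool → List Bool
  | false => true :: List.replicate (b - 1) false
  | true  => true :: List.replicate b false

/-- The morphism ψ_b extended to words. -/
def psiW (b : ℕ) (v : List Bool) : List Bool := v.flatMap (psiL b)

/-- A palindrome is a word equal to its reversal. -/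
def IsPal {A : Type*} (w : List A) : Prop := w.reverse = w

/-- Palindromic length: minimal number of palindromes concatenating to `w`. -/
noncomputable def palLen {A : Type*} (w : List A) : ℕ :=
  sInf {k | ∃ l : List (List A), l.length = k ∧ (∀ p ∈ l, IsPal p) ∧ l.flatten = w}

/-- `v` is a factor of the infinite word `u`. -/
def FactorOf {A : Type*} (v : List A) (u : ℕ → A) : Prop :=
  ∃ i, v = (List.range v.length).map (fun k => u (i + k))

/-- A Sturmian word: exactly `n+1` factors of each length `n`. -/
def Sturmian (u : ℕ → Bool) : Prop :=
  ∀ n, Set.ncard {v : List Bool | v.length = n ∧ FactorOf v u} = n + 1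

/-- `u` has slope `α`: the frequency of the letter 1 (= `true`) is `α`. -/
def HasSlope (u : ℕ → Bool) (α : ℝ) : Prop :=
  Filter.Tendsto (fun n => (((List.range n).map u).count true : ℝ) / n)
    Filter.atTop (nhds α)

/-- The image of an infinite word under ψ_b. -/
noncomputable def psiInf (b : ℕ) (u : ℕ → Bool) : ℕ → Bool :=
  fun k => (((List.range (k + 1)).map u).flatMap (psiL b)).getD k false

/-- PL_u(n): maximal palindromic length of factors of length `n` of `u`. -/
noncomputable def PL (u : ℕ → Bool) (n : ℕ) : ℕ :=
  sSup {k | ∃ v : List Bool, v.length = n ∧ FactorOf v u ∧ palLen v = k}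

lemma psiL_pal (b : ℕ) (a : Bool) : (psiL b a ++ [true]).reverse = psiL b a ++ [true] := by
  cases a <;> simp [psiL, List.reverse_replicate]

lemma key (b : ℕ) : ∀ w : List Bool, (psiW b w ++ [true]).reverse = psiW b w.reverse ++ [true]
  | [] => by simp [psiW]
  | a :: w => by
    have IH := key b w
    have h := psiL_pal b a
    simp only [psiW, List.flatMap_cons, List.reverse_cons, List.flatMap_append,
      List.flatMap_cons, List.flatMap_nil, List.append_nil] at *
    calc ((psiL b a ++ w.flatMap (psiL b)) ++ [true]).reverse
        = (w.flatMap (psiL b) ++ [true]).reverse ++ (psiL b a).reverse := by simp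
      _ = (w.reverse.flatMap (psiL b) ++ [true]) ++ (psiL b a).reverse := by rw [IH]
      _ = w.reverse.flatMap (psiL b) ++ ([true] ++ (psiL b a).reverse) := by simp
      _ = w.reverse.flatMap (psiL b) ++ (psiL b a ++ [true]) := by
          rw [← h]; simp
      _ = (w.reverse.flatMap (psiL b) ++ psiL b a) ++ [true] := by simp

theorem stmt3 (b : ℕ) (hb : 1 ≤ b) (p : List Bool) (hp : IsPal p) :
    IsPal (psiW b p ++ [true]) ∧ IsPal (psiW b p).tail := by
  have h1 : IsPal (psiW b p ++ [true]) := by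
    unfold IsPal
    rw [key b p, hp]
  refine ⟨h1, ?_⟩
  cases p with
  | nil => simp [psiW, IsPal]
  | cons a w =>
    have hcons : psiW b (a :: w) = true :: (List.replicate (cond a b (b-1)) false ++ psiW b w) := by
      cases a <;> simp [psiW, psiL]
    set t := List.replicate (cond a b (b-1)) false ++ psiW b w with ht
    rw [hcons]
    unfold IsPal at h1 ⊢
    rw [hcons] at h1
    simp only [List.tail_cons]
    have h2 : true :: (t.reverse ++ [true]) = true :: (t ++ [true]) := by
      simpa using h1
    injection h2 with _ h3
    exact List.append_left_injective [true] h3
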